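/- Let d ≥ 1, σ > 0, ε_low > 0, δ₁ ≥ 0, δ₂ ≥ 0 and K ≥ 0. Let y ∈ ℝ^d, let q : ℝ^d → (0,∞) be differentiable at y with q(y) ≥ ε_low and ‖ ∇ log q(y) ‖_∞ ≤ K, and let h₁ ∈ ℝ and h₄ ∈ ℝ^d satisfy | q(y) − h₁ | ≤ δ₂ and | σ · ∂_i q(y) − h₄,i | ≤ δ₁ for each i ∈ {1,…,d}. Define the clipped score estimate ŝ = h₄ / ( σ · max(h₁, ε_low) ) ∈ ℝ^d. Then ‖ ŝ − ∇ log q(y) ‖_∞ ≤ ( δ₁ / σ + K δ₂ ) / ε_low. -/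

import Mathlib

open MeasureTheory

/-- Final assembly step of the proof of Theorem 2 of the paper: the clipped score
estimate `shat = h₄ / (σ · max(h₁, ε_low))`, built from approximations `h₄ ≈ σ∇q(y)` (error
`δ₁` per coordinate) and `h₁ ≈ q(y)` (error `δ₂`), deviates from the true conditional
score `∇ log q(y) = ∇q(y)/q(y)` by at most `(δ₁/σ + K δ₂)/ε_low` in the sup norm, on the
region where `q(y) ≥ ε_low` and `‖∇ log q(y)‖_∞ ≤ K`. -/
theorem clipped_score_estimate_error
    (d : ℕ) (hd : 1 ≤ d)
    (σ εlow δ₁ δ₂ K : ℝ)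
    (hσ : 0 < σ) (hεlow : 0 < εlow) (hδ₁ : 0 ≤ δ₁) (hδ₂ : 0 ≤ δ₂) (hK : 0 ≤ K)
    (y : EuclideanSpace ℝ (Fin d))
    (q : EuclideanSpace ℝ (Fin d) → ℝ) (hqpos : ∀ z, 0 < q z)
    (g : EuclideanSpace ℝ (Fin d)) (hgrad : HasGradientAt q g y)
    (hqlow : εlow ≤ q y)
    (hscore : ∀ i : Fin d, |g i / q y| ≤ K)
    (h₁ : ℝ) (h₄ : Fin d → ℝ)
    (hh₁ : |q y - h₁| ≤ δ₂)
    (hh₄ : ∀ i : Fin d, |σ * g i - h₄ i| ≤ δ₁)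
    (shat : Fin d → ℝ) (hshat : ∀ i, shat i = h₄ i / (σ * max h₁ εlow)) :
    ∀ i : Fin d, |shat i - g i / q y| ≤ (δ₁ / σ + K * δ₂) / εlow := by
  intro i
  rw [hshat]
  set m := max h₁ εlow with hm_def
  have hm : εlow ≤ m := le_max_right _ _
  have hmpos : 0 < m := lt_of_lt_of_le hεlow hm
  have hq : 0 < q y := hqpos y
  -- the clipped value is still δ₂-close to q y
  have key : |q y - m| ≤ δ₂ := by
    rcases le_total εlow h₁ with h | h
    · rw [hm_def, max_eq_left h]; exact hh₁
    · rw [hm_def, max_eq_right h]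
      rw [abs_of_nonneg (by linarith)]
      calc q y - εlow ≤ q y - h₁ := by linarith
        _ ≤ |q y - h₁| := le_abs_self _
        _ ≤ δ₂ := hh₁
  have decomp : h₄ i / (σ * m) - g i / q y
      = (h₄ i - σ * g i) / (σ * m) + (g i / q y) * ((q y - m) / m) := by
    field_simp
    ring
  have hA : |(h₄ i - σ * g i) / (σ * m)| ≤ δ₁ / (σ * εlow) := by
    rw [abs_div, abs_of_pos (mul_pos hσ hmpos)]
    apply div_le_div₀ hδ₁ _ (mul_pos hσ hεlow) _
    · rw [abs_sub_comm]; exact hh₄ i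
    · exact mul_le_mul_of_nonneg_left hm hσ.le
  have hB : |(g i / q y) * ((q y - m) / m)| ≤ K * (δ₂ / εlow) := by
    rw [abs_mul]
    apply mul_le_mul (hscore i) _ (abs_nonneg _) hK
    rw [abs_div, abs_of_pos hmpos]
    exact div_le_div₀ hδ₂ key hεlow hm
  calc |h₄ i / (σ * m) - g i / q y|
      ≤ |(h₄ i - σ * g i) / (σ * m)| + |(g i / q y) * ((q y - m) / m)| := by
        rw [decomp]; exact abs_add_le _ _
    _ ≤ δ₁ / (σ * εlow) + K * (δ₂ / εlow) := add_le_add hA hB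
    _ = (δ₁ / σ + K * δ₂) / εlow := by field_simp
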